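/- If R is an EM-G-graded commutative ring, then the polynomial ring R[x], with the grading (R[x])_σ = R_σ[x], is also an EM-G-graded ring. Consequently R[x_1, ..., x_k] is EM-G-graded for every k ≥ 1. -/

import Mathlib

open Polynomial

/-- `R` (with grading `𝒜`) is an EM-`G`-graded ring. -/
def IsEMGGraded {G R : Type*} [CommRing R] (𝒜 : G → AddSubgroup R) : Prop :=
  ∀ f : R[X], f ≠ 0 → (∃ σ : G, ∀ i, f.coeff i ∈ 𝒜 σ) → f ∉ nonZeroDivisors R[X] →
    ∃ (c : R) (g : R[X]), c ∉ nonZeroDivisors R ∧ g ∈ nonZeroDivisors R[X] ∧ f = C c * g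

/-- The induced grading on `R[x]`: `(R[x])_σ = R_σ[x]`. -/
def polyGrading {G R : Type*} [CommRing R] (𝒜 : G → AddSubgroup R) (σ : G) :
    AddSubgroup R[X] where
  carrier := {p | ∀ i, p.coeff i ∈ 𝒜 σ}
  zero_mem' := fun i => by simpa using (𝒜 σ).zero_mem
  add_mem' := fun ha hb i => by simpa using add_mem (ha i) (hb i)
  neg_mem' := fun ha i => by simpa using neg_mem (ha i)

/-- The induced grading on `R[x₁,…,x_k]`: homogeneous of degree `σ` iff all coefficients
lie in `R_σ`. -/
def mvPolyGrading {G R : Type*} [CommRing R] (𝒜 : G → AddSubgroup R) (k : ℕ) (σ : G) :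
    AddSubgroup (MvPolynomial (Fin k) R) where
  carrier := {p | ∀ m, MvPolynomial.coeff m p ∈ 𝒜 σ}
  zero_mem' := fun m => by simpa using (𝒜 σ).zero_mem
  add_mem' := fun ha hb m => by simpa using add_mem (ha m) (hb m)
  neg_mem' := fun ha m => by simpa using neg_mem (ha m)

/-! ### Auxiliary lemmas -/

lemma mem_polyGrading_iff {G R : Type*} [CommRing R] {𝒜 : G → AddSubgroup R} {σ : G}
    {p : R[X]} : p ∈ polyGrading 𝒜 σ ↔ ∀ i, p.coeff i ∈ 𝒜 σ := Iff.rfl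

lemma mem_mvPolyGrading_iff {G R : Type*} [CommRing R] {𝒜 : G → AddSubgroup R} {k : ℕ} {σ : G}
    {p : MvPolynomial (Fin k) R} :
    p ∈ mvPolyGrading 𝒜 k σ ↔ ∀ m, MvPolynomial.coeff m p ∈ 𝒜 σ := Iff.rfl

section Pack

variable {R : Type*} [CommRing R]

lemma natDegree_lt_of_coeff_eq_zero {p : R[X]} {N : ℕ} (hN : 0 < N)
    (h : ∀ m, N ≤ m → p.coeff m = 0) : p.natDegree < N := by
  rcases eq_or_ne p 0 with rfl | hp
  · simpa using hN
  · by_contra hc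
    exact (Polynomial.leadingCoeff_ne_zero.2 hp) (h _ (le_of_not_gt hc))

/-- Kronecker packing: `∑_{i ≤ d} F_i(x) x^{N i}`. -/
noncomputable def packP (d N : ℕ) (F : R[X][X]) : R[X] :=
  ∑ i ∈ Finset.range (d + 1), F.coeff i * X ^ (N * i)

lemma packP_coeff {d N : ℕ} {F : R[X][X]} (hN : ∀ i, (F.coeff i).natDegree < N)
    (hd : ∀ i, d < i → F.coeff i = 0) (m : ℕ) :
    (packP d N F).coeff m = (F.coeff (m / N)).coeff (m % N) := by
  have hN0 : 0 < N := lt_of_le_of_lt (Nat.zero_le _) (hN 0)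
  have hmd := Nat.mod_add_div m N
  have hmlt := Nat.mod_lt m hN0
  have hdivle : N * (m / N) ≤ m := by
    rw [Nat.mul_comm]; exact Nat.div_mul_le_self m N
  unfold packP
  rw [Polynomial.finset_sum_coeff]
  rw [Finset.sum_eq_single (m / N)]
  · rw [Polynomial.coeff_mul_X_pow']
    rw [if_pos hdivle]
    congr 1
    exact Nat.sub_eq_of_eq_add hmd.symm
  · intro i _ hne
    rw [Polynomial.coeff_mul_X_pow']
    rcases lt_or_gt_of_ne hne with hlt | hgt
    · -- i < m / N : shift too small, coefficient index past the degree
      have h1 : N * i + N ≤ m := by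
        calc N * i + N = N * (i + 1) := by ring
          _ ≤ N * (m / N) := Nat.mul_le_mul_left N hlt
          _ ≤ m := hdivle
      rw [if_pos (by linarith)]
      apply Polynomial.coeff_eq_zero_of_natDegree_lt
      apply Nat.lt_sub_of_add_lt
      have := hN i
      linarith
    · -- i > m / N : shift too big
      have h1 : N * (m / N) + N ≤ N * i := by
        calc N * (m / N) + N = N * (m / N + 1) := by ring
          _ ≤ N * i := Nat.mul_le_mul_left N hgt
      rw [if_neg (by simp only [not_le]; linarith)]
  · intro hout
    have : d < m / N := by
      simp only [Finset.mem_range] at hout; omega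
    rw [hd _ this, zero_mul, Polynomial.coeff_zero]

lemma mul_packP {d N : ℕ} {F : R[X][X]} (q : R[X]) (h : ∀ i, q * F.coeff i = 0) :
    q * packP d N F = 0 := by
  unfold packP
  rw [Finset.mul_sum]
  exact Finset.sum_eq_zero fun i _ => by rw [← mul_assoc, h, zero_mul]

/-- Kronecker unpacking of `g` into chunks of size `N`. -/
noncomputable def unpackP (N : ℕ) (g : R[X]) : R[X][X] :=
  ∑ i ∈ Finset.range (g.natDegree + 1),
    Polynomial.monomial i (∑ j ∈ Finset.range N, Polynomial.monomial j (g.coeff (N * i + j)))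

lemma unpackP_coeff {N : ℕ} (hN : 0 < N) (g : R[X]) (i : ℕ) :
    (unpackP N g).coeff i =
      ∑ j ∈ Finset.range N, Polynomial.monomial j (g.coeff (N * i + j)) := by
  unfold unpackP
  rw [Polynomial.finset_sum_coeff]
  by_cases hi : i ∈ Finset.range (g.natDegree + 1)
  · rw [Finset.sum_eq_single i]
    · rw [Polynomial.coeff_monomial, if_pos rfl]
    · intro b _ hb; rw [Polynomial.coeff_monomial, if_neg hb]
    · exact fun h => absurd hi h
  · rw [Finset.sum_eq_zero fun b hb => by
      rw [Polynomial.coeff_monomial, if_neg]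
      intro hbi; subst hbi; exact hi hb]
    symm
    apply Finset.sum_eq_zero
    intro j _
    have hgi : g.natDegree < i := by simpa [Nat.lt_succ_iff] using hi
    have : g.natDegree < N * i + j := by nlinarith
    rw [Polynomial.coeff_eq_zero_of_natDegree_lt this, Polynomial.monomial_zero_right]

lemma unpackP_coeff_coeff {N : ℕ} (hN : 0 < N) (g : R[X]) (i j : ℕ) :
    ((unpackP N g).coeff i).coeff j = if j < N then g.coeff (N * i + j) else 0 := by
  rw [unpackP_coeff hN, Polynomial.finset_sum_coeff]
  by_cases hj : j < N
  · rw [if_pos hj, Finset.sum_eq_single j]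
    · rw [Polynomial.coeff_monomial, if_pos rfl]
    · intro b _ hb; rw [Polynomial.coeff_monomial, if_neg hb]
    · intro h; exact absurd (Finset.mem_range.2 hj) h
  · rw [if_neg hj]
    apply Finset.sum_eq_zero
    intro b hb
    rw [Polynomial.coeff_monomial, if_neg]
    intro hbj; subst hbj; exact hj (Finset.mem_range.1 hb)

lemma packP_unpackP {N : ℕ} (hN : 0 < N) (g : R[X]) :
    packP g.natDegree N (unpackP N g) = g := by
  have hNdeg : ∀ i, ((unpackP N g).coeff i).natDegree < N := by
    intro i
    apply natDegree_lt_of_coeff_eq_zero hN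
    intro m hm
    rw [unpackP_coeff_coeff hN, if_neg (by omega)]
  have hd : ∀ i, g.natDegree < i → (unpackP N g).coeff i = 0 := by
    intro i hi
    ext j
    rw [unpackP_coeff_coeff hN, Polynomial.coeff_zero]
    split
    · apply Polynomial.coeff_eq_zero_of_natDegree_lt
      nlinarith
    · rfl
  ext m
  rw [packP_coeff hNdeg hd, unpackP_coeff_coeff hN,
    if_pos (Nat.mod_lt m hN), Nat.div_add_mod]

end Pack

/-- The single-variable step: if `R` is EM-`G`-graded then so is `R[x]`. -/
lemma isEMGGraded_polyGrading {G R : Type*} [CommRing R] (𝒜 : G → AddSubgroup R)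
    (hEM : IsEMGGraded 𝒜) : IsEMGGraded (polyGrading 𝒜) := by
  rintro F hF0 ⟨σ, hσ⟩ hFzd
  set d := F.natDegree with hdd
  set N := (Finset.range (d + 1)).sup (fun i => (F.coeff i).natDegree) + 1 with hNd
  have hN0 : 0 < N := Nat.succ_pos _
  have hN : ∀ i, (F.coeff i).natDegree < N := by
    intro i
    by_cases h : i ≤ d
    · exact Nat.lt_succ_of_le (Finset.le_sup (f := fun i => (F.coeff i).natDegree)
        (Finset.mem_range.2 (Nat.lt_succ_of_le h)))
    · rw [Polynomial.coeff_eq_zero_of_natDegree_lt (by omega), Polynomial.natDegree_zero]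
      exact hN0
  have hd : ∀ i, d < i → F.coeff i = 0 := fun i hi =>
    Polynomial.coeff_eq_zero_of_natDegree_lt hi
  -- the key coefficient identity
  have hkey : ∀ i j, j < N → (F.coeff i).coeff j = (packP d N F).coeff (N * i + j) := by
    intro i j hj
    rw [packP_coeff hN hd, Nat.mul_add_div hN0, Nat.mul_add_mod,
      Nat.div_eq_of_lt hj, Nat.mod_eq_of_lt hj, Nat.add_zero]
  -- pack F is nonzero
  have hpack0 : packP d N F ≠ 0 := by
    intro h0
    apply hF0
    ext i j
    simp only [Polynomial.coeff_zero]
    by_cases hjN : j < N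
    · rw [hkey i j hjN, h0, Polynomial.coeff_zero]
    · exact Polynomial.coeff_eq_zero_of_natDegree_lt (lt_of_lt_of_le (hN i) (not_lt.1 hjN))
  -- pack F is homogeneous
  have hpackhom : ∃ τ : G, ∀ m, (packP d N F).coeff m ∈ 𝒜 τ := by
    refine ⟨σ, fun m => ?_⟩
    rw [packP_coeff hN hd]
    exact hσ (m / N) (m % N)
  -- pack F is a zero-divisor
  have hpackzd : packP d N F ∉ nonZeroDivisors R[X] := by
    obtain ⟨q, hq0, hqF⟩ := Polynomial.notMem_nonZeroDivisors_iff.1 hFzd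
    have hq : ∀ i, q * F.coeff i = 0 := by
      intro i
      have := congrArg (fun p => Polynomial.coeff p i) hqF
      simpa [Polynomial.coeff_smul, smul_eq_mul] using this
    intro hmem
    exact hq0 (mem_nonZeroDivisors_iff_right.1 hmem q (mul_packP q hq))
  obtain ⟨c, g, hc, hg, hfg⟩ := hEM (packP d N F) hpack0 hpackhom hpackzd
  refine ⟨C c, unpackP N g, ?_, ?_, ?_⟩
  · -- C c is a zero-divisor in R[X]
    obtain ⟨r, hr⟩ := _root_.notMem_nonZeroDivisors_iff_right.1 hc
    intro hmem
    have : (C r : R[X]) = 0 := mem_nonZeroDivisors_iff_right.1 hmem (C r) (by rw [← Polynomial.C_mul, hr.1, Polynomial.C_0])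
    exact hr.2 (Polynomial.C_eq_zero.1 this)
  · -- unpack g is regular
    rw [Polynomial.mem_nonZeroDivisors_iff]
    intro q hq
    have hq' : ∀ i, q * (unpackP N g).coeff i = 0 := by
      intro i
      have := congrArg (fun p => Polynomial.coeff p i) hq
      simpa [Polynomial.coeff_smul, smul_eq_mul] using this
    have : q * g = 0 := by
      rw [← packP_unpackP hN0 g]
      exact mul_packP q hq'
    exact mem_nonZeroDivisors_iff_right.1 hg q this
  · -- F = C (C c) * unpack g
    ext i j
    rw [Polynomial.coeff_C_mul, Polynomial.coeff_C_mul, unpackP_coeff_coeff hN0]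
    by_cases hjN : j < N
    · rw [if_pos hjN, hkey i j hjN, hfg, Polynomial.coeff_C_mul]
    · rw [if_neg hjN, mul_zero,
        Polynomial.coeff_eq_zero_of_natDegree_lt (lt_of_lt_of_le (hN i) (not_lt.1 hjN))]

/-- EM-gradedness transfers along a ring isomorphism respecting the gradings. -/
lemma isEMGGraded_transfer {G A B : Type*} [CommRing A] [CommRing B]
    (𝒜 : G → AddSubgroup A) (ℬ : G → AddSubgroup B) (e : A ≃+* B)
    (hcomp : ∀ (σ : G) (a : A), a ∈ 𝒜 σ ↔ e a ∈ ℬ σ)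
    (hA : IsEMGGraded 𝒜) : IsEMGGraded ℬ := by
  have hmapmap : ∀ p : B[X], (p.map (e.symm : B →+* A)).map (e : A →+* B) = p := by
    intro p
    rw [Polynomial.map_map]
    convert Polynomial.map_id
    ext x
    simp
  have hmapmap' : ∀ p : A[X], (p.map (e : A →+* B)).map (e.symm : B →+* A) = p := by
    intro p
    rw [Polynomial.map_map]
    convert Polynomial.map_id
    ext x
    simp
  rintro f hf0 ⟨σ, hσ⟩ hzd
  set f' : A[X] := f.map (e.symm : B →+* A) with hf'
  have hf'0 : f' ≠ 0 := by
    intro h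
    apply hf0
    rw [← hmapmap f, ← hf', h, Polynomial.map_zero]
  have hf'hom : ∃ τ : G, ∀ i, f'.coeff i ∈ 𝒜 τ := by
    refine ⟨σ, fun i => ?_⟩
    rw [hf', Polynomial.coeff_map]
    refine (hcomp σ _).2 ?_
    have h1 : e ((e.symm : B →+* A) (f.coeff i)) = f.coeff i := e.apply_symm_apply _
    rw [h1]
    exact hσ i
  have hf'zd : f' ∉ nonZeroDivisors A[X] := by
    intro hmem
    apply hzd
    rw [mem_nonZeroDivisors_iff_right]
    intro z hz
    have hz' : z.map (e.symm : B →+* A) * f' = 0 := by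
      rw [hf', ← Polynomial.map_mul, hz, Polynomial.map_zero]
    have := mem_nonZeroDivisors_iff_right.1 hmem _ hz'
    rw [← hmapmap z, this, Polynomial.map_zero]
  obtain ⟨c, g, hc, hg, heq⟩ := hA f' hf'0 hf'hom hf'zd
  refine ⟨e c, g.map (e : A →+* B), ?_, ?_, ?_⟩
  · intro hmem
    apply hc
    rw [mem_nonZeroDivisors_iff_right]
    intro x hx
    have : e x * e c = 0 := by rw [← map_mul, hx, map_zero]
    have := mem_nonZeroDivisors_iff_right.1 hmem _ this
    exact e.injective (by rw [this, map_zero])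
  · rw [mem_nonZeroDivisors_iff_right]
    intro z hz
    have hz' : z.map (e.symm : B →+* A) * g = 0 := by
      rw [← hmapmap' g, ← Polynomial.map_mul, hz, Polynomial.map_zero]
    have := mem_nonZeroDivisors_iff_right.1 hg _ hz'
    rw [← hmapmap z, this, Polynomial.map_zero]
  · conv_lhs => rw [← hmapmap f, ← hf', heq]
    rw [Polynomial.map_mul, Polynomial.map_C]
    rfl

/-- If `R` is EM-`G`-graded, then so is `R[x]` with the grading
`(R[x])_σ = R_σ[x]`; consequently `R[x₁,…,x_k]` is EM-`G`-graded for every `k ≥ 1`. -/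
theorem stmt_16 {G R : Type*} [AddGroup G] [DecidableEq G] [CommRing R]
    (𝒜 : G → AddSubgroup R) [GradedRing 𝒜] (hEM : IsEMGGraded 𝒜) :
    IsEMGGraded (polyGrading 𝒜) ∧
      ∀ k : ℕ, 1 ≤ k → IsEMGGraded (mvPolyGrading 𝒜 k) := by
  have hmv : ∀ k : ℕ, IsEMGGraded (mvPolyGrading 𝒜 k) := by
    intro k
    induction k with
    | zero =>
      refine isEMGGraded_transfer 𝒜 (mvPolyGrading 𝒜 0)
        (MvPolynomial.isEmptyRingEquiv R (Fin 0)).symm ?_ hEM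
      have hC : ∀ a : R, (MvPolynomial.isEmptyRingEquiv R (Fin 0)).symm a =
          MvPolynomial.C a := by
        intro a
        simp [MvPolynomial.isEmptyRingEquiv, MvPolynomial.isEmptyAlgEquiv, Algebra.ofId]
        rfl
      intro σ a
      have hsub : ∀ m : Fin 0 →₀ ℕ, m = 0 := fun m => by
        ext x; exact isEmptyElim x
      constructor
      · intro ha m
        rw [hsub m, hC]
        simpa [MvPolynomial.coeff_zero_C] using ha
      · intro h
        have := h 0
        rw [hC] at this
        simpa [MvPolynomial.coeff_zero_C] using this
    | succ k ih =>
      refine isEMGGraded_transfer (polyGrading (mvPolyGrading 𝒜 k)) (mvPolyGrading 𝒜 (k + 1))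
        ((MvPolynomial.finSuccEquiv R k).toRingEquiv).symm ?_
        (isEMGGraded_polyGrading _ ih)
      intro σ p
      have hsymm : ∀ q : (MvPolynomial (Fin k) R)[X],
          ((MvPolynomial.finSuccEquiv R k).toRingEquiv).symm q =
            (MvPolynomial.finSuccEquiv R k).symm q := by
        intro q
        rw [AlgEquiv.toRingEquiv_eq_coe, ← AlgEquiv.symm_toRingEquiv]
        rfl
      constructor
      · intro hp m
        show MvPolynomial.coeff m
          (((MvPolynomial.finSuccEquiv R k).toRingEquiv).symm p) ∈ 𝒜 σ
        rw [hsymm]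
        have key : MvPolynomial.coeff m ((MvPolynomial.finSuccEquiv R k).symm p) =
            MvPolynomial.coeff (Finsupp.tail m)
              ((MvPolynomial.finSuccEquiv R k
                ((MvPolynomial.finSuccEquiv R k).symm p)).coeff (m 0)) := by
          rw [MvPolynomial.finSuccEquiv_coeff_coeff, Finsupp.cons_tail]
        rw [key, AlgEquiv.apply_symm_apply]
        exact hp (m 0) (Finsupp.tail m)
      · intro hp i m
        have hp' : ∀ m' : Fin (k + 1) →₀ ℕ,
            MvPolynomial.coeff m' ((MvPolynomial.finSuccEquiv R k).symm p) ∈ 𝒜 σ := by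
          intro m'
          have := hp m'
          rwa [hsymm] at this
        have key : MvPolynomial.coeff m (p.coeff i) =
            MvPolynomial.coeff (Finsupp.cons i m)
              ((MvPolynomial.finSuccEquiv R k).symm p) := by
          conv_lhs => rw [← (MvPolynomial.finSuccEquiv R k).apply_symm_apply p]
          rw [MvPolynomial.finSuccEquiv_coeff_coeff]
        rw [key]
        exact hp' (Finsupp.cons i m)
  exact ⟨isEMGGraded_polyGrading 𝒜 hEM, fun k _ => hmv k⟩
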